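/- Let U ⊆ {0,1,*}^d be such that for any two distinct u, u' ∈ U, the number of coordinates where u and u' take distinct values in {0,1} (ignoring coordinates where either has a *) is between 1 and k. For u ∈ U, let j(u) denote the number of * coordinates of u. If v ∈ {0,1}^d is covered by u₁ ∈ U and the complementary vector 1−v is covered by u₂ ∈ U, then j(u₁) + j(u₂) ≥ d − k. -/

import Mathlib

/-- Hamming distance between binary vectors. -/
def distB {d : ℕ} (u v : Fin d → Bool) : ℕ :=
  (Finset.univ.filter (fun i => u i ≠ v i)).card

/-- Hamming distance between vectors in {0,1,*}^d (entries `Option Bool`, `none` = joker):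
counts coordinates where both entries are non-joker and differ. -/
def distS {d : ℕ} (u v : Fin d → Option Bool) : ℕ :=
  (Finset.univ.filter (fun i => ∃ a b : Bool, u i = some a ∧ v i = some b ∧ a ≠ b)).card

/-- `v ∈ {0,1}^d` is covered by `u ∈ {0,1,*}^d` if they agree on all non-joker coordinates of `u`. -/
def covers {d : ℕ} (u : Fin d → Option Bool) (v : Fin d → Bool) : Prop :=
  ∀ i : Fin d, ∀ b : Bool, u i = some b → v i = b

/-- Number of joker (`*`) coordinates of `u`. -/
def jokers {d : ℕ} (u : Fin d → Option Bool) : ℕ :=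
  (Finset.univ.filter (fun i => u i = none)).card

/-- Hamming weight of a binary vector. -/
def weight {d : ℕ} (v : Fin d → Bool) : ℕ :=
  (Finset.univ.filter (fun i => v i = true)).card
/-- If v is covered by u₁ and its complement by u₂, then j(u₁)+j(u₂) ≥ d−k. -/
theorem jokers_sum_lower (d k : ℕ) (U : Set (Fin d → Option Bool))
    (hU : ∀ u ∈ U, ∀ u' ∈ U, u ≠ u' → 1 ≤ distS u u' ∧ distS u u' ≤ k)
    (v : Fin d → Bool) (u₁ u₂ : Fin d → Option Bool)
    (h₁ : u₁ ∈ U) (h₂ : u₂ ∈ U)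
    (hc₁ : covers u₁ v) (hc₂ : covers u₂ (fun i => ! v i)) :
    d - k ≤ jokers u₁ + jokers u₂ := by
  -- key: each coordinate is a joker of u₁, a joker of u₂, or counted in distS u₁ u₂
  have key : d ≤ distS u₁ u₂ + (jokers u₁ + jokers u₂) := by
    have hsub : (Finset.univ : Finset (Fin d)) ⊆
        (Finset.univ.filter (fun i => ∃ a b : Bool, u₁ i = some a ∧ u₂ i = some b ∧ a ≠ b)) ∪
        ((Finset.univ.filter (fun i => u₁ i = none)) ∪
         (Finset.univ.filter (fun i => u₂ i = none))) := by
      intro i _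
      simp only [Finset.mem_union, Finset.mem_filter, Finset.mem_univ, true_and]
      rcases h1 : u₁ i with _ | a
      · tauto
      rcases h2 : u₂ i with _ | b
      · tauto
      left
      refine ⟨a, b, rfl, rfl, ?_⟩
      have ha := hc₁ i a h1
      have hb := hc₂ i b h2
      simp only at hb
      intro hab
      subst hab
      rw [ha] at hb
      simp at hb
    calc d = (Finset.univ : Finset (Fin d)).card := by simp
      _ ≤ _ := Finset.card_le_card hsub
      _ ≤ _ := le_trans (Finset.card_union_le _ _)
          (by exact Nat.add_le_add_left (Finset.card_union_le _ _) _)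
  by_cases h : u₁ = u₂
  · -- then all coordinates of u₁ are jokers
    have hall : ∀ i, u₁ i = none := by
      intro i
      rcases h1 : u₁ i with _ | a
      · rfl
      · have ha := hc₁ i a h1
        have hb := hc₂ i a (h ▸ h1)
        simp only at hb
        rw [ha] at hb
        simp at hb
    have : jokers u₁ = d := by
      unfold jokers
      rw [Finset.filter_true_of_mem (fun i _ => hall i)]
      simp
    omega
  · have hk := (hU u₁ h₁ u₂ h₂ h).2
    unfold distS at key hk
    omega
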